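/- Let A be a 2×2 integer matrix with A² = −3I, v such that {v, Av} is linearly independent, and 𝒟 = {0, v, Av}. Then both v and Av lie in T − T, where T = T(A,𝒟) is the associated self-affine set; hence T is connected. -/

import Mathlib

open Matrix
open scoped Pointwise

/-- `A` has integer entries. -/
def IsIntMat (A : Matrix (Fin 2) (Fin 2) ℝ) : Prop :=
  ∀ i j, ∃ m : ℤ, A i j = (m : ℝ)

/-- The self-affine set `T(A, D) = {∑_{i≥1} A^{-i} d_i : d_i ∈ D}`. -/
noncomputable def selfAffine (A : Matrix (Fin 2) (Fin 2) ℝ) (D : Set (Fin 2 → ℝ)) :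
    Set (Fin 2 → ℝ) :=
  { x | ∃ d : ℕ → (Fin 2 → ℝ), (∀ n, d n ∈ D) ∧
      HasSum (fun n => (A⁻¹ ^ (n + 1)) *ᵥ d n) x }

lemma hasSum_progression (p a : ℕ) (ha : a < p) (x : ℝ) (h0 : 0 ≤ x) (h1 : x < 1) :
    HasSum (fun n : ℕ => if n % p = a then x ^ (n / p) else 0) (1-x)⁻¹ := by
  have hp : 0 < p := lt_of_le_of_lt (Nat.zero_le a) ha
  have hg : Function.Injective (fun k : ℕ => p * k + a) := by
    intro k l hkl
    simp only [] at hkl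
    have := Nat.eq_of_mul_eq_mul_left hp (by omega : p * k = p * l)
    exact this
  have hvan : ∀ n, n ∉ Set.range (fun k : ℕ => p * k + a) →
      (if n % p = a then x ^ (n / p) else 0) = 0 := by
    intro n hn
    rw [if_neg]
    intro hmod
    refine hn ⟨n / p, ?_⟩
    simp only []
    rw [← hmod]
    exact Nat.div_add_mod n p
  rw [← Function.Injective.hasSum_iff hg hvan]
  have : ((fun n : ℕ => if n % p = a then x ^ (n / p) else 0) ∘ fun k : ℕ => p * k + a)
      = fun k : ℕ => x ^ k := by
    funext k
    simp only [Function.comp]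
    rw [if_pos (by rw [Nat.mul_add_mod]; exact Nat.mod_eq_of_lt ha)]
    rw [Nat.mul_add_div hp, Nat.div_eq_of_lt ha, Nat.add_zero]
  rw [this]
  exact hasSum_geometric_of_lt_one h0 h1

section MatrixFacts

variable {A : Matrix (Fin 2) (Fin 2) ℝ}

lemma sqA (h : A * A + (3 : ℝ) • (1 : Matrix (Fin 2) (Fin 2) ℝ) = 0) :
    A * A = (-3 : ℝ) • (1 : Matrix (Fin 2) (Fin 2) ℝ) := by
  have := eq_neg_of_add_eq_zero_left h
  rw [this, neg_smul]

lemma invA (h : A * A + (3 : ℝ) • (1 : Matrix (Fin 2) (Fin 2) ℝ) = 0) :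
    A⁻¹ = (-(3:ℝ)⁻¹) • A := by
  apply Matrix.inv_eq_right_inv
  rw [Matrix.mul_smul, sqA h, smul_smul]
  norm_num

lemma invA_mul (h : A * A + (3 : ℝ) • (1 : Matrix (Fin 2) (Fin 2) ℝ) = 0) :
    A⁻¹ * A = 1 := by
  rw [invA h, Matrix.smul_mul, sqA h, smul_smul]
  norm_num

lemma mul_invA (h : A * A + (3 : ℝ) • (1 : Matrix (Fin 2) (Fin 2) ℝ) = 0) :
    A * A⁻¹ = 1 := by
  rw [invA h, Matrix.mul_smul, sqA h, smul_smul]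
  norm_num

lemma invA_sq (h : A * A + (3 : ℝ) • (1 : Matrix (Fin 2) (Fin 2) ℝ) = 0) :
    A⁻¹ * A⁻¹ = (-(3:ℝ)⁻¹) • (1 : Matrix (Fin 2) (Fin 2) ℝ) := by
  rw [invA h, Matrix.smul_mul, Matrix.mul_smul, sqA h, smul_smul, smul_smul]
  norm_num

lemma invA_pow (h : A * A + (3 : ℝ) • (1 : Matrix (Fin 2) (Fin 2) ℝ) = 0) (k r : ℕ) :
    A⁻¹ ^ (2 * k + r) = ((-(3:ℝ)⁻¹) ^ k) • A⁻¹ ^ r := by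
  rw [pow_add, pow_mul, pow_two, invA_sq h, smul_pow, one_pow, Matrix.smul_mul, one_mul]

end MatrixFacts

section Points

variable {A : Matrix (Fin 2) (Fin 2) ℝ} {v : Fin 2 → ℝ}

lemma appAv (h : A * A + (3 : ℝ) • (1 : Matrix (Fin 2) (Fin 2) ℝ) = 0) :
    A⁻¹ *ᵥ (A *ᵥ v) = v := by
  rw [Matrix.mulVec_mulVec, invA_mul h, Matrix.one_mulVec]

lemma appv (h : A * A + (3 : ℝ) • (1 : Matrix (Fin 2) (Fin 2) ℝ) = 0) :
    A⁻¹ *ᵥ v = (-(3:ℝ)⁻¹) • (A *ᵥ v) := by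
  rw [invA h, Matrix.smul_mulVec]

lemma zeroMemSelfAffine : (0 : Fin 2 → ℝ) ∈ selfAffine A {0, v, A *ᵥ v} := by
  refine ⟨fun _ => 0, fun n => by simp, ?_⟩
  simpa [Matrix.mulVec_zero] using hasSum_zero

lemma v_mem (h : A * A + (3 : ℝ) • (1 : Matrix (Fin 2) (Fin 2) ℝ) = 0) :
    v ∈ selfAffine A {0, v, A *ᵥ v} := by
  refine ⟨fun n => if n = 0 then A *ᵥ v else 0, fun n => by by_cases hn : n = 0 <;> simp [hn], ?_⟩
  have : (fun n : ℕ => A⁻¹ ^ (n+1) *ᵥ (if n = 0 then A *ᵥ v else 0))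
      = fun n : ℕ => if n = 0 then v else 0 := by
    funext n
    by_cases hn : n = 0
    · subst hn
      simp [pow_one, appAv h, -Matrix.mulVec_fin_two]
    · simp [hn, Matrix.mulVec_zero]
  rw [this]
  exact hasSum_ite_eq 0 v

lemma xi_mem (h : A * A + (3 : ℝ) • (1 : Matrix (Fin 2) (Fin 2) ℝ) = 0) :
    ((4:ℝ)⁻¹) • (A *ᵥ v) ∈ selfAffine A {0, v, A *ᵥ v} := by
  refine ⟨fun n => if n % 4 = 2 then v else if n % 4 = 3 then A *ᵥ v else 0,
    fun n => by by_cases h2 : n % 4 = 2 <;> by_cases h3 : n % 4 = 3 <;> simp [h2, h3], ?_⟩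
  have key : HasSum (fun n : ℕ =>
      ((9:ℝ)⁻¹ * (if n % 4 = 2 then (9:ℝ)⁻¹ ^ (n / 4) else 0)
        + (9:ℝ)⁻¹ * (if n % 4 = 3 then (9:ℝ)⁻¹ ^ (n / 4) else 0)) • (A *ᵥ v))
      (((9:ℝ)⁻¹ * (1 - 9⁻¹)⁻¹ + (9:ℝ)⁻¹ * (1 - 9⁻¹)⁻¹) • (A *ᵥ v)) := by
    exact (((hasSum_progression 4 2 (by norm_num) (9:ℝ)⁻¹ (by norm_num) (by norm_num)).mul_left
      (9:ℝ)⁻¹).add ((hasSum_progression 4 3 (by norm_num) (9:ℝ)⁻¹ (by norm_num)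
      (by norm_num)).mul_left (9:ℝ)⁻¹)).smul_const (A *ᵥ v)
  have hc : ((9:ℝ)⁻¹ * (1 - 9⁻¹)⁻¹ + (9:ℝ)⁻¹ * (1 - 9⁻¹)⁻¹) = (4:ℝ)⁻¹ := by norm_num
  rw [hc] at key
  convert key using 1
  funext n
  obtain ⟨q, r, hrlt, rfl⟩ : ∃ q r, r < 4 ∧ n = 4 * q + r :=
    ⟨n / 4, n % 4, Nat.mod_lt n (by norm_num), (Nat.div_add_mod n 4).symm⟩
  have hmod : (4 * q + r) % 4 = r := by omega
  have hdiv : (4 * q + r) / 4 = q := by omega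
  interval_cases r
  · simp [hmod, hdiv, Matrix.mulVec_zero]
  · simp [hmod, hdiv, Matrix.mulVec_zero]
  · beta_reduce
    simp only [hmod, hdiv, reduceIte, mul_zero, add_zero, zero_add]
    rw [show 4 * q + 2 + 1 = 2 * (2 * q + 1) + 1 from by ring, invA_pow h, pow_one,
      Matrix.smul_mulVec, appv h, smul_smul]
    congr 1
    rw [← pow_succ, show 2 * q + 1 + 1 = 2 * (q + 1) from by ring, pow_mul]
    norm_num [pow_succ]
    ring
  · beta_reduce
    simp only [hmod, hdiv, reduceIte, mul_zero, add_zero, zero_add]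
    rw [show 4 * q + 3 + 1 = 2 * (2 * q + 2) + 0 from by ring, invA_pow h, pow_zero,
      Matrix.smul_mulVec, Matrix.one_mulVec]
    congr 1
    rw [show 2 * q + 2 = 2 * (q + 1) from by ring, pow_mul]
    norm_num [pow_succ]
    ring

lemma eta_mem (h : A * A + (3 : ℝ) • (1 : Matrix (Fin 2) (Fin 2) ℝ) = 0) :
    (-(3/4) : ℝ) • (A *ᵥ v) ∈ selfAffine A {0, v, A *ᵥ v} := by
  refine ⟨fun n => if n % 4 = 0 then v else if n % 4 = 1 then A *ᵥ v else 0,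
    fun n => by by_cases h2 : n % 4 = 0 <;> by_cases h3 : n % 4 = 1 <;> simp [h2, h3], ?_⟩
  have key : HasSum (fun n : ℕ =>
      ((-(3:ℝ)⁻¹) * (if n % 4 = 0 then (9:ℝ)⁻¹ ^ (n / 4) else 0)
        + (-(3:ℝ)⁻¹) * (if n % 4 = 1 then (9:ℝ)⁻¹ ^ (n / 4) else 0)) • (A *ᵥ v))
      (((-(3:ℝ)⁻¹) * (1 - 9⁻¹)⁻¹ + (-(3:ℝ)⁻¹) * (1 - 9⁻¹)⁻¹) • (A *ᵥ v)) := by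
    exact (((hasSum_progression 4 0 (by norm_num) (9:ℝ)⁻¹ (by norm_num) (by norm_num)).mul_left
      (-(3:ℝ)⁻¹)).add ((hasSum_progression 4 1 (by norm_num) (9:ℝ)⁻¹ (by norm_num)
      (by norm_num)).mul_left (-(3:ℝ)⁻¹))).smul_const (A *ᵥ v)
  have hc : ((-(3:ℝ)⁻¹) * (1 - 9⁻¹)⁻¹ + (-(3:ℝ)⁻¹) * (1 - 9⁻¹)⁻¹) = (-(3/4) : ℝ) := by norm_num
  rw [hc] at key
  convert key using 1
  funext n
  obtain ⟨q, r, hrlt, rfl⟩ : ∃ q r, r < 4 ∧ n = 4 * q + r :=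
    ⟨n / 4, n % 4, Nat.mod_lt n (by norm_num), (Nat.div_add_mod n 4).symm⟩
  have hmod : (4 * q + r) % 4 = r := by omega
  have hdiv : (4 * q + r) / 4 = q := by omega
  interval_cases r
  · beta_reduce
    simp only [hmod, hdiv, reduceIte, mul_zero, add_zero, zero_add]
    rw [show 4 * q + 0 + 1 = 2 * (2 * q) + 1 from by ring, invA_pow h, pow_one,
      Matrix.smul_mulVec, appv h, smul_smul]
    congr 1
    · rw [pow_mul]
      norm_num
      ring
    · simp [Nat.mul_mod_right]
  · beta_reduce
    simp only [hmod, hdiv, reduceIte, mul_zero, add_zero, zero_add]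
    rw [show 4 * q + 1 + 1 = 2 * (2 * q + 1) + 0 from by ring, invA_pow h, pow_zero,
      Matrix.smul_mulVec, Matrix.one_mulVec]
    congr 1
    rw [pow_succ, pow_mul]
    norm_num
    ring
  · simp [hmod, hdiv, Matrix.mulVec_zero]
  · simp [hmod, hdiv, Matrix.mulVec_zero]

end Points

noncomputable def dig (A : Matrix (Fin 2) (Fin 2) ℝ) (v : Fin 2 → ℝ) : Fin 3 → (Fin 2 → ℝ) :=
  ![0, v, A *ᵥ v]

section Compactness

variable {A : Matrix (Fin 2) (Fin 2) ℝ} {v : Fin 2 → ℝ}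

lemma dig_mem (i : Fin 3) : dig A v i ∈ ({0, v, A *ᵥ v} : Set (Fin 2 → ℝ)) := by
  fin_cases i <;> simp [dig]

lemma norm_bound (h : A * A + (3 : ℝ) • (1 : Matrix (Fin 2) (Fin 2) ℝ) = 0) (n : ℕ) (i : Fin 3) :
    ‖A⁻¹ ^ (n + 1) *ᵥ dig A v i‖ ≤
      (‖v‖ + ‖A *ᵥ v‖ + ‖A⁻¹ *ᵥ v‖) * ((3:ℝ)⁻¹) ^ (n / 2) := by
  set m := ‖v‖ + ‖A *ᵥ v‖ + ‖A⁻¹ *ᵥ v‖ with hm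
  have n1 : (0:ℝ) ≤ ‖v‖ := norm_nonneg _
  have n2 : (0:ℝ) ≤ ‖A *ᵥ v‖ := norm_nonneg _
  have n3 : (0:ℝ) ≤ ‖A⁻¹ *ᵥ v‖ := norm_nonneg _
  have hb : ∀ r : ℕ, r ≤ 1 → ‖A⁻¹ ^ r *ᵥ dig A v i‖ ≤ m := by
    intro r hr
    interval_cases r
    · rw [pow_zero, Matrix.one_mulVec]
      fin_cases i <;> simp [dig, hm, -Matrix.mulVec_fin_two] <;> linarith
    · rw [pow_one]
      fin_cases i <;> simp [dig, hm, Matrix.mulVec_zero, appAv h, -Matrix.mulVec_fin_two] <;> linarith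
  have hdecomp : n + 1 = 2 * ((n+1)/2) + (n+1) % 2 := ((Nat.div_add_mod (n+1) 2)).symm
  rw [hdecomp, invA_pow h, Matrix.smul_mulVec, norm_smul]
  have h1 : ‖(-(3:ℝ)⁻¹) ^ ((n+1)/2)‖ = ((3:ℝ)⁻¹) ^ ((n+1)/2) := by
    rw [norm_pow]
    norm_num
  rw [h1]
  have h2 : ((3:ℝ)⁻¹) ^ ((n+1)/2) ≤ ((3:ℝ)⁻¹) ^ (n/2) :=
    pow_le_pow_of_le_one (by norm_num) (by norm_num) (by omega)
  have h3 : ‖A⁻¹ ^ ((n+1) % 2) *ᵥ dig A v i‖ ≤ m := hb _ (by omega)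
  have hmn : (0:ℝ) ≤ m := by rw [hm]; linarith
  calc ((3:ℝ)⁻¹) ^ ((n+1)/2) * ‖A⁻¹ ^ ((n+1) % 2) *ᵥ dig A v i‖
      ≤ ((3:ℝ)⁻¹) ^ (n/2) * m := by
        apply mul_le_mul h2 h3 (norm_nonneg _) (by positivity)
    _ = m * ((3:ℝ)⁻¹) ^ (n/2) := by ring

lemma summable_u : Summable (fun n : ℕ => (‖v‖ + ‖A *ᵥ v‖ + ‖A⁻¹ *ᵥ v‖) * ((3:ℝ)⁻¹) ^ (n / 2)) := by
  apply Summable.mul_left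
  have : (fun n : ℕ => ((3:ℝ)⁻¹) ^ (n / 2)) = fun n : ℕ =>
      (if n % 2 = 0 then ((3:ℝ)⁻¹) ^ (n / 2) else 0) + (if n % 2 = 1 then ((3:ℝ)⁻¹) ^ (n / 2) else 0) := by
    funext n
    rcases Nat.even_or_odd n with he | ho
    · have h0 : n % 2 = 0 := Nat.even_iff.mp he
      rw [if_pos h0, if_neg (by omega), add_zero]
    · have h1 : n % 2 = 1 := Nat.odd_iff.mp ho
      rw [if_neg (by omega), if_pos h1, zero_add]
  rw [this]
  exact ((hasSum_progression 2 0 (by norm_num) _ (by norm_num) (by norm_num)).add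
    (hasSum_progression 2 1 (by norm_num) _ (by norm_num) (by norm_num))).summable

lemma selfAffine_eq_range (h : A * A + (3 : ℝ) • (1 : Matrix (Fin 2) (Fin 2) ℝ) = 0) :
    selfAffine A {0, v, A *ᵥ v} =
      Set.range (fun σ : ℕ → Fin 3 => ∑' n : ℕ, A⁻¹ ^ (n + 1) *ᵥ dig A v (σ n)) := by
  ext x
  constructor
  · rintro ⟨d, hd, hsum⟩
    refine ⟨fun n => if d n = 0 then 0 else if d n = v then 1 else 2, ?_⟩
    have hdig : ∀ n, dig A v (if d n = 0 then 0 else if d n = v then 1 else 2) = d n := by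
      intro n
      by_cases h1 : d n = 0
      · rw [if_pos h1, h1]; simp [dig]
      · by_cases h2 : d n = v
        · rw [if_neg h1, if_pos h2, h2]; simp [dig]
        · rw [if_neg h1, if_neg h2]
          have hmem := hd n
          simp only [Set.mem_insert_iff, Set.mem_singleton_iff] at hmem
          rcases hmem with h0 | h0 | h0
          · exact absurd h0 h1
          · exact absurd h0 h2
          · rw [h0]; simp [dig]
    simp only [hdig]
    exact hsum.tsum_eq
  · rintro ⟨σ, rfl⟩
    refine ⟨fun n => dig A v (σ n), fun n => dig_mem _, ?_⟩
    exact (Summable.of_norm_bounded (summable_u (A := A) (v := v)) (fun n => norm_bound h n (σ n))).hasSum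

lemma isCompact_selfAffine (h : A * A + (3 : ℝ) • (1 : Matrix (Fin 2) (Fin 2) ℝ) = 0) :
    IsCompact (selfAffine A ({0, v, A *ᵥ v} : Set (Fin 2 → ℝ))) := by
  rw [selfAffine_eq_range h]
  apply isCompact_range
  apply continuous_tsum
  · intro n
    exact ((Matrix.mulVecLin (A⁻¹ ^ (n+1))).continuous_of_finiteDimensional).comp
      ((continuous_of_discreteTopology (α := Fin 3)).comp (continuous_apply n))
  · exact summable_u (A := A) (v := v)
  · intro n σ
    exact norm_bound h n (σ n)

end Compactness

section IFS

variable {A : Matrix (Fin 2) (Fin 2) ℝ} {v : Fin 2 → ℝ}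

lemma hasSum_mulVec {M : Matrix (Fin 2) (Fin 2) ℝ} {t : ℕ → Fin 2 → ℝ} {x : Fin 2 → ℝ}
    (ht : HasSum t x) : HasSum (fun n => M *ᵥ t n) (M *ᵥ x) := by
  have := ht.map (Matrix.mulVecLin M).toAddMonoidHom
    ((Matrix.mulVecLin M).continuous_of_finiteDimensional)
  simpa [Matrix.mulVecLin_apply, -Matrix.mulVec_fin_two, Function.comp_def] using this

lemma prepend (i : Fin 3) {x : Fin 2 → ℝ} (hx : x ∈ selfAffine A {0, v, A *ᵥ v}) :
    A⁻¹ *ᵥ (x + dig A v i) ∈ selfAffine A {0, v, A *ᵥ v} := by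
  obtain ⟨d, hd, hsum⟩ := hx
  refine ⟨fun n => Nat.rec (dig A v i) (fun k _ => d k) n, fun n => ?_, ?_⟩
  · cases n with
    | zero => exact dig_mem i
    | succ k => exact hd k
  · set f : ℕ → (Fin 2 → ℝ) :=
      fun n => A⁻¹ ^ (n + 1) *ᵥ (Nat.rec (dig A v i) (fun k _ => d k) n : Fin 2 → ℝ) with hf
    have h1 : HasSum (fun n => f (n + 1)) (A⁻¹ *ᵥ x) := by
      have h2 : (fun n => f (n + 1)) = fun n => A⁻¹ *ᵥ (A⁻¹ ^ (n + 1) *ᵥ d n) := by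
        funext n
        rw [hf]
        simp only []
        rw [Matrix.mulVec_mulVec, ← pow_succ']
      rw [h2]
      exact hasSum_mulVec hsum
    have h3 := (hasSum_nat_add_iff (f := f) 1).mp h1
    rw [Finset.range_one, Finset.sum_singleton] at h3
    have h4 : f 0 = A⁻¹ *ᵥ dig A v i := by rw [hf]; simp [pow_one]
    rw [h4, ← Matrix.mulVec_add] at h3
    exact h3

lemma decompose (h : A * A + (3 : ℝ) • (1 : Matrix (Fin 2) (Fin 2) ℝ) = 0)
    {x : Fin 2 → ℝ} (hx : x ∈ selfAffine A {0, v, A *ᵥ v}) :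
    ∃ (i : Fin 3) (y : Fin 2 → ℝ), y ∈ selfAffine A {0, v, A *ᵥ v} ∧
      x = A⁻¹ *ᵥ (y + dig A v i) := by
  obtain ⟨d, hd, hsum⟩ := hx
  have hdig0 : ∃ i : Fin 3, d 0 = dig A v i := by
    have hmem := hd 0
    simp only [Set.mem_insert_iff, Set.mem_singleton_iff] at hmem
    rcases hmem with h0 | h0 | h0
    · exact ⟨0, by simp [h0, dig]⟩
    · exact ⟨1, by simp [h0, dig]⟩
    · exact ⟨2, by simp [h0, dig]⟩
  obtain ⟨i, hi⟩ := hdig0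
  set f : ℕ → (Fin 2 → ℝ) := fun n => A⁻¹ ^ (n + 1) *ᵥ d n with hf
  have hshift : HasSum (fun n => f (n + 1)) (x - f 0) := by
    rw [hasSum_nat_add_iff (f := f) 1, Finset.range_one, Finset.sum_singleton, sub_add_cancel]
    exact hsum
  have hmap : HasSum (fun n => A *ᵥ f (n + 1)) (A *ᵥ (x - f 0)) := hasSum_mulVec hshift
  have hterm : (fun n => A *ᵥ f (n + 1)) = fun n => A⁻¹ ^ (n + 1) *ᵥ d (n + 1) := by
    funext n
    rw [hf]
    simp only []
    rw [Matrix.mulVec_mulVec, pow_succ', ← mul_assoc, mul_invA h, one_mul]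
  rw [hterm] at hmap
  refine ⟨i, A *ᵥ (x - f 0), ⟨fun n => d (n + 1), fun n => hd (n + 1), hmap⟩, ?_⟩
  rw [← hi, Matrix.mulVec_add, Matrix.mulVec_mulVec, invA_mul h, Matrix.one_mulVec]
  have hf0 : f 0 = A⁻¹ *ᵥ d 0 := by rw [hf]; simp [pow_one]
  rw [hf0]
  abel

end IFS

section Chains

variable {E : Type*} [NormedAddCommGroup E]

/-- One step of an ε-chain inside `S`. -/
def ChainRel (S : Set E) (ε : ℝ) (a b : E) : Prop := b ∈ S ∧ dist a b ≤ ε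

/-- ε-chain connectivity inside `S`. -/
def Chained (S : Set E) (ε : ℝ) (a b : E) : Prop :=
  Relation.ReflTransGen (ChainRel S ε) a b

lemma Chained.mono {S : Set E} {ε ε' : ℝ} (hε : ε ≤ ε') {a b : E} (hc : Chained S ε a b) :
    Chained S ε' a b :=
  Relation.ReflTransGen.mono (r := ChainRel S ε) (p := ChainRel S ε') (fun _ _ hab => ⟨hab.1, hab.2.trans hε⟩) a b hc

lemma Chained.map {S : Set E} {ε K : ℝ} (hK : 0 ≤ K) {g : E → E}
    (hgS : ∀ z ∈ S, g z ∈ S) (hgl : ∀ z w, dist (g z) (g w) ≤ K * dist z w)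
    {a b : E} (hc : Chained S ε a b) : Chained S (K * ε) (g a) (g b) := by
  induction hc with
  | refl => exact Relation.ReflTransGen.refl
  | tail _ hcb ih =>
      exact ih.tail ⟨hgS _ hcb.1, (hgl _ _).trans (mul_le_mul_of_nonneg_left hcb.2 hK)⟩

lemma isPreconnected_of_chained {T : Set E} (hcomp : IsCompact T)
    (hch : ∀ ε > (0:ℝ), ∀ x ∈ T, ∀ y ∈ T, Chained T ε x y) : IsPreconnected T := by
  intro U V hU hV hUV ⟨x, hxT, hxU⟩ ⟨y, hyT, hyV⟩
  by_contra hne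
  have hemp : T ∩ (U ∩ V) = ∅ := Set.not_nonempty_iff_eq_empty.mp hne
  set K1 : Set E := T ∩ Vᶜ with hK1
  set K2 : Set E := T ∩ Uᶜ with hK2
  have hK1c : IsCompact K1 := hcomp.inter_right hV.isClosed_compl
  have hK2c : IsCompact K2 := hcomp.inter_right hU.isClosed_compl
  have hdisj : Disjoint K1 K2 := by
    rw [Set.disjoint_iff]
    rintro z ⟨⟨hzT, hzV⟩, _, hzU⟩
    exact absurd (hUV hzT) (by simp only [Set.mem_union]; push_neg; exact ⟨hzU, hzV⟩)
  have hcover : ∀ z ∈ T, z ∈ K1 ∪ K2 := by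
    intro z hz
    by_cases hzV : z ∈ V
    · right
      refine ⟨hz, fun hzU => ?_⟩
      have : z ∈ T ∩ (U ∩ V) := ⟨hz, hzU, hzV⟩
      rw [hemp] at this
      exact this
    · exact Or.inl ⟨hz, hzV⟩
  obtain ⟨δ, hδ, hth⟩ := hdisj.exists_thickenings hK1c hK2c.isClosed
  have hxK1 : x ∈ K1 := by
    refine ⟨hxT, fun hxV => ?_⟩
    have : x ∈ T ∩ (U ∩ V) := ⟨hxT, hxU, hxV⟩
    rw [hemp] at this
    exact this
  have hyK2 : y ∈ K2 := by
    refine ⟨hyT, fun hyU => ?_⟩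
    have : y ∈ T ∩ (U ∩ V) := ⟨hyT, hyU, hyV⟩
    rw [hemp] at this
    exact this
  have hchain := hch (δ/2) (by linarith) x hxT y hyT
  have hinv : ∀ b, Chained T (δ/2) x b → b ∈ K1 := by
    intro b hb
    induction hb with
    | refl => exact hxK1
    | tail _ hcb ih =>
        rename_i c b' _
        rcases hcover b' hcb.1 with hb1 | hb2
        · exact hb1
        · exfalso
          have hbth2 : b' ∈ Metric.thickening δ K2 :=
            Metric.self_subset_thickening hδ _ hb2
          have hbth1 : b' ∈ Metric.thickening δ K1 := by
            rw [Metric.mem_thickening_iff]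
            exact ⟨c, ih, by rw [dist_comm]; linarith [hcb.2]⟩
          exact Set.disjoint_iff.mp hth ⟨hbth1, hbth2⟩
  exact (hinv y hchain).2 hyV
end Chains

section MainChain

variable {A : Matrix (Fin 2) (Fin 2) ℝ} {v : Fin 2 → ℝ}

lemma chained_selfAffine (h : A * A + (3 : ℝ) • (1 : Matrix (Fin 2) (Fin 2) ℝ) = 0)
    (R : ℝ)
    (hR : ∀ a ∈ selfAffine A ({0, v, A *ᵥ v} : Set (Fin 2 → ℝ)),
      ∀ b ∈ selfAffine A ({0, v, A *ᵥ v} : Set (Fin 2 → ℝ)), dist a b ≤ R) (n : ℕ) :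
    ∀ x ∈ selfAffine A ({0, v, A *ᵥ v} : Set (Fin 2 → ℝ)),
      ∀ y ∈ selfAffine A ({0, v, A *ᵥ v} : Set (Fin 2 → ℝ)),
        Chained (selfAffine A ({0, v, A *ᵥ v} : Set (Fin 2 → ℝ))) (R * ((3:ℝ)⁻¹) ^ n) x y := by
  set T : Set (Fin 2 → ℝ) := selfAffine A ({0, v, A *ᵥ v} : Set (Fin 2 → ℝ)) with hTdef
  set f : Fin 3 → (Fin 2 → ℝ) → (Fin 2 → ℝ) := fun i z => A⁻¹ *ᵥ (z + dig A v i) with hfdef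
  have hfT : ∀ (i : Fin 3) (z : Fin 2 → ℝ), z ∈ T → f i z ∈ T := fun i z hz => prepend i hz
  have hdec : ∀ z ∈ T, ∃ (i : Fin 3) (w : Fin 2 → ℝ), w ∈ T ∧ z = f i w := by
    intro z hz
    obtain ⟨i, w, hw, he⟩ := decompose h hz
    exact ⟨i, w, hw, he⟩
  have hcontr : ∀ (i j : Fin 3) (a b : Fin 2 → ℝ),
      dist (f i (f j a)) (f i (f j b)) ≤ 3⁻¹ * dist a b := by
    intro i j a b
    have keyeq : f i (f j a) - f i (f j b) = (-(3:ℝ)⁻¹) • (a - b) := by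
      rw [hfdef]
      simp only []
      rw [← Matrix.mulVec_sub, add_sub_add_right_eq_sub, ← Matrix.mulVec_sub,
        add_sub_add_right_eq_sub, Matrix.mulVec_mulVec, invA_sq h,
        Matrix.smul_mulVec, Matrix.one_mulVec]
    rw [dist_eq_norm, keyeq, norm_smul, dist_eq_norm]
    have : ‖(-(3:ℝ)⁻¹)‖ = (3:ℝ)⁻¹ := by norm_num
    rw [this]
  have hσT : ∀ j : Fin 3, (![v, 0, (-(3/4) : ℝ) • (A *ᵥ v)] : Fin 3 → Fin 2 → ℝ) j ∈ T := by
    intro j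
    fin_cases j
    · exact v_mem h
    · exact zeroMemSelfAffine
    · exact eta_mem h
  have hτT : ∀ j : Fin 3, (![v, v, ((4:ℝ)⁻¹) • (A *ᵥ v)] : Fin 3 → Fin 2 → ℝ) j ∈ T := by
    intro j
    fin_cases j
    · exact v_mem h
    · exact v_mem h
    · exact xi_mem h
  set σp : Fin 3 → (Fin 2 → ℝ) := ![v, 0, (-(3/4) : ℝ) • (A *ᵥ v)] with hσp
  set τp : Fin 3 → (Fin 2 → ℝ) := ![v, v, ((4:ℝ)⁻¹) • (A *ᵥ v)] with hτp
  have hστ : ∀ j : Fin 3, f j (σp j) = f 0 (τp j) := by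
    intro j
    fin_cases j
    · rfl
    · show A⁻¹ *ᵥ (0 + dig A v 1) = A⁻¹ *ᵥ (v + dig A v 0)
      simp [dig]
    · show A⁻¹ *ᵥ ((-(3/4) : ℝ) • (A *ᵥ v) + dig A v 2) = A⁻¹ *ᵥ (((4:ℝ)⁻¹) • (A *ᵥ v) + dig A v 0)
      have hd2 : dig A v 2 = A *ᵥ v := by simp [dig]
      have hd0 : dig A v 0 = 0 := by simp [dig]
      rw [hd2, hd0]
      have harg : (-(3/4) : ℝ) • (A *ᵥ v) + (A *ᵥ v) = ((4:ℝ)⁻¹) • (A *ᵥ v) + 0 := by module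
      rw [harg]
  induction n with
  | zero =>
      intro x hx y hy
      exact Relation.ReflTransGen.single ⟨hy, by simpa using hR x hx y hy⟩
  | succ n ih =>
      have hKnn : (0:ℝ) ≤ 3⁻¹ := by norm_num
      have heps : ∀ s : ℝ, 3⁻¹ * (R * (3:ℝ)⁻¹ ^ n) = R * (3:ℝ)⁻¹ ^ (n+1) := by
        intro _
        ring
      have Lwb : ∀ (i j j' : Fin 3) (a b : Fin 2 → ℝ), a ∈ T → b ∈ T →
          Chained T (R * ((3:ℝ)⁻¹) ^ (n+1)) (f i (f j a)) (f i (f j' b)) := by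
        intro i j j' a b ha hb
        have hmapS : ∀ (i₀ j₀ : Fin 3), ∀ z ∈ T, f i₀ (f j₀ z) ∈ T :=
          fun i₀ j₀ z hz => hfT _ _ (hfT _ _ hz)
        have c1 : Chained T (3⁻¹ * (R * (3:ℝ)⁻¹ ^ n)) (f i (f j a)) (f i (f j (σp j))) :=
          Chained.map hKnn (hmapS i j) (hcontr i j) (ih a ha (σp j) (hσT j))
        have c2 : Chained T (3⁻¹ * (R * (3:ℝ)⁻¹ ^ n)) (f i (f 0 (τp j))) (f i (f 0 (τp j'))) :=
          Chained.map hKnn (hmapS i 0) (hcontr i 0) (ih (τp j) (hτT j) (τp j') (hτT j'))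
        have c3 : Chained T (3⁻¹ * (R * (3:ℝ)⁻¹ ^ n)) (f i (f j' (σp j'))) (f i (f j' b)) :=
          Chained.map hKnn (hmapS i j') (hcontr i j') (ih (σp j') (hσT j') b hb)
        rw [hστ j] at c1
        rw [hστ j'] at c3
        have call := (c1.trans c2).trans c3
        exact Chained.mono (le_of_eq (heps 0)) call
      intro x hx y hy
      obtain ⟨i, x1, hx1, hxe⟩ := hdec x hx
      obtain ⟨j, x2, hx2, hx1e⟩ := hdec x1 hx1
      obtain ⟨i', y1, hy1, hye⟩ := hdec y hy
      obtain ⟨j', y2, hy2, hy1e⟩ := hdec y1 hy1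
      obtain ⟨k, c, hc, hσie⟩ := hdec (σp i) (hσT i)
      obtain ⟨k', c', hc', hσie'⟩ := hdec (σp i') (hσT i')
      obtain ⟨m, w, hw, hτie⟩ := hdec (τp i) (hτT i)
      obtain ⟨m', w', hw', hτie'⟩ := hdec (τp i') (hτT i')
      have e1 : f i (f k c) = f 0 (f m w) := by rw [← hσie, hστ i, hτie]
      have e2 : f i' (f k' c') = f 0 (f m' w') := by rw [← hσie', hστ i', hτie']
      have c1 : Chained T (R * ((3:ℝ)⁻¹) ^ (n+1)) x (f 0 (f m w)) := by
        rw [hxe, hx1e, ← e1]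
        exact Lwb i j k x2 c hx2 hc
      have c2 : Chained T (R * ((3:ℝ)⁻¹) ^ (n+1)) (f 0 (f m w)) (f 0 (f m' w')) :=
        Lwb 0 m m' w w' hw hw'
      have c3 : Chained T (R * ((3:ℝ)⁻¹) ^ (n+1)) (f 0 (f m' w')) y := by
        rw [hye, hy1e, ← e2]
        exact Lwb i' k' j' c' y2 hc' hy2
      exact (c1.trans c2).trans c3

end MainChain

theorem stmt7 (A : Matrix (Fin 2) (Fin 2) ℝ) (hint : IsIntMat A)
    (h : A * A + (3 : ℝ) • (1 : Matrix (Fin 2) (Fin 2) ℝ) = 0)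
    (v : Fin 2 → ℝ) (hv : LinearIndependent ℝ ![v, A *ᵥ v])
    (D : Set (Fin 2 → ℝ)) (hD : D = {0, v, A *ᵥ v})
    (T : Set (Fin 2 → ℝ)) (hT : T = selfAffine A D) :
    v ∈ T - T ∧ (A *ᵥ v) ∈ T - T ∧ IsConnected T := by
  subst hT
  subst hD
  refine ⟨?_, ?_, ?_, ?_⟩
  · have hmem := Set.sub_mem_sub (v_mem (A := A) (v := v) h) (zeroMemSelfAffine (A := A) (v := v))
    simpa using hmem
  · have hmem := Set.sub_mem_sub (xi_mem (A := A) (v := v) h) (eta_mem (A := A) (v := v) h)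
    have he : ((4:ℝ)⁻¹) • (A *ᵥ v) - (-(3/4) : ℝ) • (A *ᵥ v) = A *ᵥ v := by module
    rwa [he] at hmem
  · exact ⟨0, zeroMemSelfAffine⟩
  · apply isPreconnected_of_chained (isCompact_selfAffine h)
    intro ε hε x hx y hy
    obtain ⟨R, hR⟩ := Metric.isBounded_iff.mp (isCompact_selfAffine h (A := A) (v := v)).isBounded
    have hR' : ∀ a ∈ selfAffine A ({0, v, A *ᵥ v} : Set (Fin 2 → ℝ)),
        ∀ b ∈ selfAffine A ({0, v, A *ᵥ v} : Set (Fin 2 → ℝ)), dist a b ≤ R :=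
      fun a ha b hb => hR ha hb
    have hRnn : (0:ℝ) ≤ R := le_trans dist_nonneg (hR hx hx)
    obtain ⟨n, hn⟩ : ∃ n : ℕ, ((3:ℝ)⁻¹) ^ n < ε / (R + 1) :=
      exists_pow_lt_of_lt_one (by positivity) (by norm_num)
    have hle : R * ((3:ℝ)⁻¹) ^ n ≤ ε := by
      have h1 : R * ((3:ℝ)⁻¹) ^ n ≤ (R + 1) * ((3:ℝ)⁻¹) ^ n := by
        apply mul_le_mul_of_nonneg_right (by linarith) (by positivity)
      have h2 : (R + 1) * ((3:ℝ)⁻¹) ^ n < (R + 1) * (ε / (R + 1)) :=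
        mul_lt_mul_of_pos_left hn (by linarith)
      have h3 : (R + 1) * (ε / (R + 1)) = ε := by
        field_simp
      linarith
    exact Chained.mono hle (chained_selfAffine h R hR' n x hx y hy)
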